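/- Let H₁, …, Hₙ be undirected hypergraphs on a common vertex set V with |V| = n, where Hᵢ = (V, Eᵢ) and each hyperedge is a nonempty subset of V. Let W = {w₁, …, wₙ} be n new vertices, and let G be the directed hypergraph on V ∪ W with directed hyperedges (e, {wᵢ}) for each i and each e ∈ Eᵢ (tail set e ⊆ V, head set {wᵢ}). Then for every i and every S ⊆ V, the number of directed hyperedges of G crossing the cut S ∪ (W \ {wᵢ}) equals |{e ∈ Eᵢ : e ∩ S ≠ ∅}|. -/

import Mathlib

/-- The edge set of the directed hypergraph `G` built from the undirected hypergraphs
`Hᵢ = (V, E i)`: one directed hyperedge `(e, {wᵢ})` (tail `e ⊆ V`, head `{wᵢ}`)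
for each `i` and each `e ∈ E i`.  Edges are encoded as pairs `(e, i)`. -/
def bigEdges {V I : Type*} [Fintype V] [DecidableEq V] [Fintype I] [DecidableEq I]
    (E : I → Finset (Finset V)) : Finset (Finset V × I) :=
  Finset.univ.filter (fun p => p.1 ∈ E p.2)

/-- The directed hyperedge `(e, {wᵢ})` crosses the cut `C ⊆ V ⊕ I`. -/
def crosses {V I : Type*} [Fintype V] [DecidableEq V] [Fintype I] [DecidableEq I]
    (p : Finset V × I) (C : Finset (V ⊕ I)) : Prop :=
  (p.1.image Sum.inl ∩ C).Nonempty ∧ (({Sum.inr p.2} : Finset (V ⊕ I)) \ C).Nonempty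

instance {V I : Type*} [Fintype V] [DecidableEq V] [Fintype I] [DecidableEq I]
    (p : Finset V × I) (C : Finset (V ⊕ I)) : Decidable (crosses p C) := by
  unfold crosses; infer_instance

/-- The cut `S ∪ (W \ {wᵢ})` of the big directed hypergraph. -/
def bigCut {V I : Type*} [Fintype V] [DecidableEq V] [Fintype I] [DecidableEq I]
    (S : Finset V) (i : I) : Finset (V ⊕ I) :=
  S.image Sum.inl ∪ (Finset.univ.erase i).image Sum.inr

/-- the number of directed hyperedges of `G` crossing `S ∪ (W \ {wᵢ})`
equals the number of hyperedges of `Hᵢ` meeting `S`. -/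
theorem directed_simulates_undirected {V I : Type*}
    [Fintype V] [DecidableEq V] [Fintype I] [DecidableEq I]
    (hcard : Fintype.card I = Fintype.card V)
    (E : I → Finset (Finset V)) (hE : ∀ i, ∀ e ∈ E i, e.Nonempty)
    (i : I) (S : Finset V) :
    ((bigEdges E).filter (fun p => crosses p (bigCut S i))).card =
      ((E i).filter (fun e => (e ∩ S).Nonempty)).card := by
  apply Finset.card_bij (fun p _ => p.1)
  · intro p hp
    rw [Finset.mem_filter] at hp
    simp only [Finset.mem_filter, bigEdges, Finset.mem_univ, true_and,
      crosses, bigCut] at hp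
    obtain ⟨hpE, ⟨x, hx⟩, ⟨y, hy⟩⟩ := hp
    simp only [Finset.mem_sdiff, Finset.mem_singleton] at hy
    obtain ⟨rfl, hy⟩ := hy
    simp only [Finset.mem_union, Finset.mem_image, Finset.mem_erase,
      Finset.mem_univ, and_true, not_or, not_exists, not_and] at hy
    have hpi : p.2 = i := by
      by_contra h
      exact (hy.2 p.2 h) rfl
    simp only [Finset.mem_inter, Finset.mem_image] at hx
    obtain ⟨⟨v, hv, rfl⟩, hxC⟩ := hx
    simp only [Finset.mem_union, Finset.mem_image] at hxC
    have hvS : v ∈ S := by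
      rcases hxC with ⟨u, hu, he⟩ | ⟨u, hu, he⟩
      · cases he; exact hu
      · cases he
    simp only [Finset.mem_filter]
    exact ⟨hpi ▸ hpE, v, Finset.mem_inter.2 ⟨hv, hvS⟩⟩
  · intro p₁ h₁ p₂ h₂ h
    rw [Finset.mem_filter] at h₁ h₂
    simp only [Finset.mem_filter, bigEdges, Finset.mem_univ, true_and, crosses] at h₁ h₂
    have e1 : p₁.2 = i := by
      obtain ⟨_, _, y, hy⟩ := h₁
      simp only [Finset.mem_sdiff, Finset.mem_singleton, bigCut, Finset.mem_union,
        Finset.mem_image, Finset.mem_erase, Finset.mem_univ, and_true, not_or,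
        not_exists, not_and] at hy
      obtain ⟨rfl, hy⟩ := hy
      by_contra hc; exact hy.2 p₁.2 hc rfl
    have e2 : p₂.2 = i := by
      obtain ⟨_, _, y, hy⟩ := h₂
      simp only [Finset.mem_sdiff, Finset.mem_singleton, bigCut, Finset.mem_union,
        Finset.mem_image, Finset.mem_erase, Finset.mem_univ, and_true, not_or,
        not_exists, not_and] at hy
      obtain ⟨rfl, hy⟩ := hy
      by_contra hc; exact hy.2 p₂.2 hc rfl
    exact Prod.ext h (e1.trans e2.symm)
  · intro e he
    simp only [Finset.mem_filter] at he
    obtain ⟨heE, v, hv⟩ := he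
    rw [Finset.mem_inter] at hv
    refine ⟨(e, i), ?_, rfl⟩
    rw [Finset.mem_filter]
    simp only [Finset.mem_filter, bigEdges, Finset.mem_univ, true_and, crosses, bigCut]
    refine ⟨heE, ⟨Sum.inl v, ?_⟩, ⟨Sum.inr i, ?_⟩⟩
    · simp only [Finset.mem_inter, Finset.mem_image, Finset.mem_union]
      exact ⟨⟨v, hv.1, rfl⟩, Or.inl ⟨v, hv.2, rfl⟩⟩
    · simp
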